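/- For every κ ∈ ℕ, every M > 0 and every δ with 0 < δ < M/2, there exists a map f : ℝ^κ → ℝ^κ that is a finite composition of affine maps and componentwise applications of ReLU(t) = max(t,0), such that (i) ‖f(x) − x‖ < δ for every x ∈ ℝ^κ with ‖x‖ < M + 2δ, and (ii) ‖f(x)‖ ≤ 2M for every x ∈ ℝ^κ, where ‖·‖ denotes the Euclidean norm on ℝ^κ. -/

import Mathlib

/-- Componentwise application of a scalar function to a vector in `ℝ^n`. -/
def compwise {n : ℕ} (σ : ℝ → ℝ) (x : EuclideanSpace ℝ (Fin n)) :
    EuclideanSpace ℝ (Fin n) :=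
  WithLp.toLp 2 (fun i : Fin n => σ (x i))

/-- Realizations of ReLU neural networks: finite compositions of affine maps
and componentwise applications of `ReLU(t) = max t 0`. -/
inductive IsReLUNet :
    ∀ {n m : ℕ}, (EuclideanSpace ℝ (Fin n) → EuclideanSpace ℝ (Fin m)) → Prop
  | affine {n m : ℕ} (A : EuclideanSpace ℝ (Fin n) →ᵃ[ℝ] EuclideanSpace ℝ (Fin m)) :
      IsReLUNet ⇑A
  | relu_comp {n m : ℕ} (f : EuclideanSpace ℝ (Fin n) → EuclideanSpace ℝ (Fin m))
      (hf : IsReLUNet f) :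
      IsReLUNet (fun x => compwise (fun t => max t 0) (f x))
  | affine_comp {n m k : ℕ} (f : EuclideanSpace ℝ (Fin n) → EuclideanSpace ℝ (Fin m))
      (hf : IsReLUNet f) (A : EuclideanSpace ℝ (Fin m) →ᵃ[ℝ] EuclideanSpace ℝ (Fin k)) :
      IsReLUNet (fun x => A (f x))

open scoped RealInnerProductSpace

namespace Stmt6Aux

lemma net_congr {n m : ℕ} {f g : EuclideanSpace ℝ (Fin n) → EuclideanSpace ℝ (Fin m)}
    (h : IsReLUNet f) (hfg : ∀ x, f x = g x) : IsReLUNet g :=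
  (funext hfg : f = g) ▸ h

lemma net_comp {n m k : ℕ} {g : EuclideanSpace ℝ (Fin m) → EuclideanSpace ℝ (Fin k)}
    {f : EuclideanSpace ℝ (Fin n) → EuclideanSpace ℝ (Fin m)}
    (hg : IsReLUNet g) (hf : IsReLUNet f) : IsReLUNet (fun x => g (f x)) := by
  induction hg with
  | affine A => exact .affine_comp f hf A
  | relu_comp g' _ ih => exact .relu_comp _ ih
  | affine_comp g' _ A ih => exact .affine_comp _ ih A

lemma net_id {n : ℕ} : IsReLUNet (fun x : EuclideanSpace ℝ (Fin n) => x) :=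
  net_congr (IsReLUNet.affine (AffineMap.id ℝ _)) (fun _ => rfl)

lemma net_iterate {n : ℕ} {f : EuclideanSpace ℝ (Fin n) → EuclideanSpace ℝ (Fin n)}
    (hf : IsReLUNet f) (k : ℕ) : IsReLUNet (f^[k]) := by
  induction k with
  | zero => exact net_id
  | succ k ih =>
      exact net_congr (net_comp hf ih) (fun x => (Function.iterate_succ_apply' f k x).symm)

noncomputable def affGen {n m : ℕ} (L : EuclideanSpace ℝ (Fin n) →ₗ[ℝ] EuclideanSpace ℝ (Fin m))
    (b : EuclideanSpace ℝ (Fin m)) :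
    EuclideanSpace ℝ (Fin n) →ᵃ[ℝ] EuclideanSpace ℝ (Fin m) where
  toFun := fun x => L x + b
  linear := L
  map_vadd' := by
    intro p v
    show L (v + p) + b = L v + (L p + b)
    rw [map_add]; abel

@[simp] lemma affGen_apply {n m : ℕ} (L : EuclideanSpace ℝ (Fin n) →ₗ[ℝ] EuclideanSpace ℝ (Fin m))
    (b : EuclideanSpace ℝ (Fin m)) (x) : affGen L b x = L x + b := rfl

variable {n : ℕ}

/-! ### coordinate facts -/

lemma abs_coord_le_norm (x : EuclideanSpace ℝ (Fin n)) (i : Fin n) : |x i| ≤ ‖x‖ := by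
  rw [EuclideanSpace.norm_eq]
  have h1 : |x i| = Real.sqrt (‖x i‖ ^ 2) := by
    rw [Real.sqrt_sq_eq_abs]; simp
  rw [h1]
  apply Real.sqrt_le_sqrt
  exact Finset.single_le_sum (f := fun j => ‖x j‖ ^ 2) (fun j _ => by positivity) (Finset.mem_univ i)

/-! ### the clip network -/

def clipFun (c : ℝ) (x : EuclideanSpace ℝ (Fin n)) : EuclideanSpace ℝ (Fin n) :=
  WithLp.toLp 2 (fun i => max (min (x i) c) (-c))

lemma clip_scalar (c t : ℝ) (hc : 0 ≤ c) :
    c - max (2*c - max (t + c) 0) 0 = max (min t c) (-c) := by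
  simp only [max_def, min_def]
  split_ifs <;> linarith

def cvec (n : ℕ) (t : ℝ) : EuclideanSpace ℝ (Fin n) := WithLp.toLp 2 (fun _ => t)

lemma clipFun_net (c : ℝ) (hc : 0 ≤ c) : IsReLUNet (clipFun (n := n) c) := by
  set A1 := affGen (LinearMap.id : EuclideanSpace ℝ (Fin n) →ₗ[ℝ] _) (cvec n c)
  set A2 := affGen (-(LinearMap.id : EuclideanSpace ℝ (Fin n) →ₗ[ℝ] _)) (cvec n (2*c))
  set A3 := affGen (-(LinearMap.id : EuclideanSpace ℝ (Fin n) →ₗ[ℝ] _)) (cvec n c)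
  have N1 : IsReLUNet (⇑A1) := .affine A1
  have N2 := IsReLUNet.relu_comp _ N1
  have N3 := IsReLUNet.affine_comp _ N2 A2
  have N4 := IsReLUNet.relu_comp _ N3
  have N5 := IsReLUNet.affine_comp _ N4 A3
  refine net_congr N5 (fun x => PiLp.ext fun i => ?_)
  show -(max (-(max (x i + c) 0) + 2*c) 0) + c = max (min (x i) c) (-c)
  rw [← clip_scalar c (x i) hc]; ring_nf

lemma clipFun_fix (c : ℝ) (x : EuclideanSpace ℝ (Fin n)) (hx : ‖x‖ ≤ c) : clipFun c x = x := by
  refine PiLp.ext fun i => ?_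
  have h := abs_coord_le_norm x i
  have h1 : -c ≤ x i := by have := abs_le.mp (h.trans hx); exact this.1
  have h2 : x i ≤ c := by have := abs_le.mp (h.trans hx); exact this.2
  show max (min (x i) c) (-c) = x i
  rw [min_eq_left h2, max_eq_left h1]

lemma clipFun_norm_le (c : ℝ) (hc : 0 ≤ c) (x : EuclideanSpace ℝ (Fin n)) :
    ‖clipFun c x‖ ≤ Real.sqrt n * c := by
  rw [EuclideanSpace.norm_eq]
  have : ∀ i : Fin n, ‖clipFun c x i‖ ^ 2 ≤ c ^ 2 := by
    intro i
    have : |max (min (x i) c) (-c)| ≤ c := by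
      rw [abs_le]; constructor
      · exact le_max_right _ _
      · exact max_le (min_le_right _ _) (by linarith)
    calc ‖clipFun c x i‖ ^ 2 = |max (min (x i) c) (-c)| ^ 2 := by rw [Real.norm_eq_abs]; rfl
    _ ≤ c ^ 2 := by nlinarith [abs_nonneg (max (min (x i) c) (-c))]
  calc Real.sqrt (∑ i, ‖clipFun c x i‖ ^ 2) ≤ Real.sqrt (∑ _i : Fin n, c ^ 2) :=
        Real.sqrt_le_sqrt (Finset.sum_le_sum fun i _ => this i)
  _ = Real.sqrt (n * c ^ 2) := by rw [Finset.sum_const]; simp [mul_comm]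
  _ = Real.sqrt n * c := by
        rw [Real.sqrt_mul (by positivity), Real.sqrt_sq hc]

/-! ### halfspace projections -/

noncomputable def Pfun (c : ℝ) (u x : EuclideanSpace ℝ (Fin n)) : EuclideanSpace ℝ (Fin n) :=
  x - max (⟪u, x⟫ - c) 0 • u

lemma inner_le_norm_of_unit {u x : EuclideanSpace ℝ (Fin n)} (hu : ‖u‖ = 1) : ⟪u, x⟫ ≤ ‖x‖ := by
  have := abs_real_inner_le_norm u x
  rw [hu, one_mul] at this
  exact (abs_le.mp this).2

lemma Pfun_sq (c : ℝ) (hc : 0 ≤ c) {u : EuclideanSpace ℝ (Fin n)} (hu : ‖u‖ = 1)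
    (x : EuclideanSpace ℝ (Fin n)) :
    ‖Pfun c u x‖ ^ 2 + 2 * c * max (⟪u, x⟫ - c) 0 ≤ ‖x‖ ^ 2 := by
  rcases le_or_gt (⟪u, x⟫) c with h | h
  · have hm : max (⟪u, x⟫ - c) 0 = 0 := max_eq_right (by linarith)
    rw [Pfun, hm]
    simp
  · have hm : max (⟪u, x⟫ - c) 0 = ⟪u, x⟫ - c := max_eq_left (by linarith)
    have hcomm : ⟪x, u⟫ = ⟪u, x⟫ := (real_inner_comm x u).symm
    rw [Pfun, hm, norm_sub_sq_real, real_inner_smul_right, norm_smul, hcomm, hu,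
      Real.norm_eq_abs, abs_of_nonneg (by linarith : (0:ℝ) ≤ ⟪u, x⟫ - c)]
    nlinarith

lemma Pfun_norm_le (c : ℝ) (hc : 0 ≤ c) {u : EuclideanSpace ℝ (Fin n)} (hu : ‖u‖ = 1)
    (x : EuclideanSpace ℝ (Fin n)) : ‖Pfun c u x‖ ≤ ‖x‖ := by
  have h := Pfun_sq c hc hu x
  have ht0 : (0:ℝ) ≤ max (⟪u, x⟫ - c) 0 := le_max_right _ _
  nlinarith [norm_nonneg (Pfun c u x), norm_nonneg x, mul_nonneg (mul_nonneg (by norm_num : (0:ℝ) ≤ 2) hc) ht0]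

lemma Pfun_inner_le (c : ℝ) {u : EuclideanSpace ℝ (Fin n)} (hu : ‖u‖ = 1)
    (x : EuclideanSpace ℝ (Fin n)) : ⟪u, Pfun c u x⟫ ≤ c := by
  have huu : ⟪u, u⟫ = 1 := by
    rw [real_inner_self_eq_norm_sq, hu]; norm_num
  rw [Pfun, inner_sub_right, real_inner_smul_right, huu, mul_one]
  rcases le_or_gt (⟪u, x⟫) c with h | h
  · rw [max_eq_right (by linarith)]; linarith
  · rw [max_eq_left (by linarith)]; linarith

lemma Pfun_move (c : ℝ) {u v : EuclideanSpace ℝ (Fin n)} (hu : ‖u‖ = 1) (hv : ‖v‖ = 1)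
    (x : EuclideanSpace ℝ (Fin n)) :
    ⟪v, Pfun c u x⟫ ≤ ⟪v, x⟫ + max (⟪u, x⟫ - c) 0 := by
  rw [Pfun, inner_sub_right, real_inner_smul_right]
  have ht0 : (0:ℝ) ≤ max (⟪u, x⟫ - c) 0 := le_max_right _ _
  have habs : |⟪v, u⟫| ≤ 1 := by
    have := abs_real_inner_le_norm v u
    rw [hu, hv] at this; linarith
  have := (abs_le.mp habs).1
  nlinarith

lemma Pfun_fix (c : ℝ) {u : EuclideanSpace ℝ (Fin n)} (hu : ‖u‖ = 1)
    (x : EuclideanSpace ℝ (Fin n)) (hx : ‖x‖ ≤ c) : Pfun c u x = x := by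
  have h : ⟪u, x⟫ ≤ c := (inner_le_norm_of_unit hu).trans hx
  rw [Pfun, max_eq_right (by linarith), zero_smul, sub_zero]

/-! ### passes -/

noncomputable def pass (c : ℝ) : List (EuclideanSpace ℝ (Fin n)) →
    EuclideanSpace ℝ (Fin n) → EuclideanSpace ℝ (Fin n)
  | [] => fun x => x
  | u :: l => fun x => pass c l (Pfun c u x)

lemma pass_norm_le (c : ℝ) (hc : 0 ≤ c) (l : List (EuclideanSpace ℝ (Fin n)))
    (hl : ∀ u ∈ l, ‖u‖ = 1) (x : EuclideanSpace ℝ (Fin n)) : ‖pass c l x‖ ≤ ‖x‖ := by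
  induction l generalizing x with
  | nil => exact le_rfl
  | cons u l ih =>
      have hu : ‖u‖ = 1 := hl u (List.mem_cons_self)
      have h1 := Pfun_norm_le c hc hu x
      have h2 := ih (fun v hv => hl v (List.mem_cons_of_mem u hv)) (Pfun c u x)
      exact h2.trans h1

lemma pass_fix (c : ℝ) (l : List (EuclideanSpace ℝ (Fin n)))
    (hl : ∀ u ∈ l, ‖u‖ = 1) (x : EuclideanSpace ℝ (Fin n)) (hx : ‖x‖ ≤ c) :
    pass c l x = x := by
  induction l with
  | nil => rfl
  | cons u l ih =>
      have hu : ‖u‖ = 1 := hl u (List.mem_cons_self)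
      show pass c l (Pfun c u x) = x
      rw [Pfun_fix c hu x hx]
      exact ih (fun v hv => hl v (List.mem_cons_of_mem u hv))

lemma pass_move (c : ℝ) (hc : 0 ≤ c) (l : List (EuclideanSpace ℝ (Fin n)))
    (hl : ∀ u ∈ l, ‖u‖ = 1) {v : EuclideanSpace ℝ (Fin n)} (hv : ‖v‖ = 1)
    (x : EuclideanSpace ℝ (Fin n)) :
    2 * c * ⟪v, pass c l x⟫ ≤ 2 * c * ⟪v, x⟫ + ‖x‖ ^ 2 - ‖pass c l x‖ ^ 2 := by
  induction l generalizing x with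
  | nil => simp only [pass]; linarith
  | cons u l ih =>
      have hu : ‖u‖ = 1 := hl u (List.mem_cons_self)
      have hl' : ∀ w ∈ l, ‖w‖ = 1 := fun w hw => hl w (List.mem_cons_of_mem u hw)
      set y := Pfun c u x with hy
      have hmov := Pfun_move c hu hv x
      have hsq := Pfun_sq c hc hu x
      have hih := ih hl' y
      have hmul : 2 * c * ⟪v, y⟫ ≤ 2 * c * ⟪v, x⟫ + 2 * c * max (⟪u, x⟫ - c) 0 := by
        nlinarith [le_max_right (⟪u, x⟫ - c) (0:ℝ)]
      show 2 * c * ⟪v, pass c l y⟫ ≤ 2 * c * ⟪v, x⟫ + ‖x‖ ^ 2 - ‖pass c l y‖ ^ 2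
      linarith

lemma pass_inner (c : ℝ) (hc : 0 ≤ c) (l : List (EuclideanSpace ℝ (Fin n)))
    (hl : ∀ u ∈ l, ‖u‖ = 1) {u : EuclideanSpace ℝ (Fin n)} (hu : u ∈ l)
    (x : EuclideanSpace ℝ (Fin n)) :
    2 * c * ⟪u, pass c l x⟫ ≤ 2 * c * c + ‖x‖ ^ 2 - ‖pass c l x‖ ^ 2 := by
  induction l generalizing x with
  | nil => exact absurd hu List.not_mem_nil
  | cons w l ih =>
      have hw : ‖w‖ = 1 := hl w (List.mem_cons_self)
      have hl' : ∀ v ∈ l, ‖v‖ = 1 := fun v hv => hl v (List.mem_cons_of_mem w hv)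
      set y := Pfun c w x with hy
      have hsq := Pfun_sq c hc hw x
      have ht0 : (0:ℝ) ≤ max (⟪w, x⟫ - c) 0 := le_max_right _ _
      have hnormsq : ‖y‖ ^ 2 ≤ ‖x‖ ^ 2 := by nlinarith
      rcases List.mem_cons.mp hu with rfl | hu'
      · have h1 : ⟪u, y⟫ ≤ c := Pfun_inner_le c hw x
        have h2 := pass_move c hc l hl' (v := u) hw y
        show 2 * c * ⟪u, pass c l y⟫ ≤ 2 * c * c + ‖x‖ ^ 2 - ‖pass c l y‖ ^ 2
        nlinarith
      · have h2 := ih hl' hu' y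
        show 2 * c * ⟪u, pass c l y⟫ ≤ 2 * c * c + ‖x‖ ^ 2 - ‖pass c l y‖ ^ 2
        linarith

/-! ### existence of a finite net of directions -/

lemma exists_net (n : ℕ) (γ : ℝ) (hγ : γ < 1) :
    ∃ l : List (EuclideanSpace ℝ (Fin n)), (∀ u ∈ l, ‖u‖ = 1) ∧
      ∀ w : EuclideanSpace ℝ (Fin n), ‖w‖ = 1 → ∃ u ∈ l, γ < ⟪u, w⟫ := by
  set S := Metric.sphere (0 : EuclideanSpace ℝ (Fin n)) 1 with hS
  have hcomp : IsCompact S := isCompact_sphere 0 1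
  have hcover : S ⊆ ⋃ u : S, {w : EuclideanSpace ℝ (Fin n) | γ < ⟪(u : EuclideanSpace ℝ (Fin n)), w⟫} := by
    intro w hw
    refine Set.mem_iUnion.mpr ⟨⟨w, hw⟩, ?_⟩
    have hw1 : ‖w‖ = 1 := by rwa [mem_sphere_zero_iff_norm] at hw
    simp only [Set.mem_setOf_eq]
    rw [real_inner_self_eq_norm_sq, hw1]
    norm_num; exact hγ
  obtain ⟨t, ht⟩ := hcomp.elim_finite_subcover
    (fun u : S => {w : EuclideanSpace ℝ (Fin n) | γ < ⟪(u : EuclideanSpace ℝ (Fin n)), w⟫})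
    (fun u => isOpen_lt continuous_const (Continuous.inner continuous_const continuous_id))
    hcover
  refine ⟨t.toList.map Subtype.val, ?_, ?_⟩
  · intro u hu
    obtain ⟨v, _, rfl⟩ := List.mem_map.mp hu
    exact mem_sphere_zero_iff_norm.mp v.2
  · intro w hw1
    have hw : w ∈ S := by rwa [mem_sphere_zero_iff_norm]
    obtain ⟨v, hvmem⟩ := Set.mem_iUnion.mp (ht hw)
    obtain ⟨hvt, hvw⟩ := Set.mem_iUnion.mp hvmem
    exact ⟨v.val, List.mem_map.mpr ⟨v, Finset.mem_toList.mpr hvt, rfl⟩, hvw⟩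

/-! ### the network realizing `Pfun` on a bounded region -/

noncomputable def L1 (u : EuclideanSpace ℝ (Fin n)) :
    EuclideanSpace ℝ (Fin n) →ₗ[ℝ] EuclideanSpace ℝ (Fin (n+1)) where
  toFun := fun x => WithLp.toLp 2 (Fin.snoc (α := fun _ => ℝ) (fun i => x i) ⟪u, x⟫)
  map_add' := by
    intro x y
    refine PiLp.ext fun i => ?_
    refine Fin.lastCases ?_ (fun j => ?_) i
    · simp [Fin.snoc_last, PiLp.add_apply, inner_add_right]
    · simp [Fin.snoc_castSucc, PiLp.add_apply]
  map_smul' := by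
    intro a x
    refine PiLp.ext fun i => ?_
    refine Fin.lastCases ?_ (fun j => ?_) i
    · simp only [Fin.snoc_last, PiLp.smul_apply, real_inner_smul_right, smul_eq_mul]
      simp [PiLp.inner_apply, RCLike.inner_apply, PiLp.smul_apply, Finset.mul_sum,
        mul_comm, mul_left_comm]
    · simp [Fin.snoc_castSucc, PiLp.smul_apply]

noncomputable def L2 (u : EuclideanSpace ℝ (Fin n)) :
    EuclideanSpace ℝ (Fin (n+1)) →ₗ[ℝ] EuclideanSpace ℝ (Fin n) where
  toFun := fun z => WithLp.toLp 2 (fun i => z i.castSucc - z (Fin.last n) * u i)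
  map_add' := by
    intro x y
    refine PiLp.ext fun i => ?_
    simp [PiLp.add_apply]
    ring
  map_smul' := by
    intro a x
    refine PiLp.ext fun i => ?_
    simp [PiLp.smul_apply, smul_eq_mul]
    ring

noncomputable def Qfun (c R : ℝ) (u x : EuclideanSpace ℝ (Fin n)) : EuclideanSpace ℝ (Fin n) :=
  WithLp.toLp 2 (fun i => max (x i + R) 0 - R - max (⟪u, x⟫ - c) 0 * u i)

lemma Qfun_net (c R : ℝ) (u : EuclideanSpace ℝ (Fin n)) : IsReLUNet (Qfun c R u) := by
  set b1 : EuclideanSpace ℝ (Fin (n+1)) := WithLp.toLp 2 (Fin.snoc (α := fun _ => ℝ) (fun _ => R) (-c)) with hb1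
  set b2 : EuclideanSpace ℝ (Fin n) := WithLp.toLp 2 (fun _ => -R) with hb2
  have N1 : IsReLUNet ⇑(affGen (L1 u) b1) := .affine _
  have N2 := IsReLUNet.relu_comp _ N1
  have N3 := IsReLUNet.affine_comp _ N2 (affGen (L2 u) b2)
  refine net_congr N3 (fun x => PiLp.ext fun i => ?_)
  show (L2 u) (compwise (fun t => max t 0) ((L1 u) x + b1)) i + b2 i
      = max (x i + R) 0 - R - max (⟪u, x⟫ - c) 0 * u i
  have e1 : ((L1 u) x + b1) i.castSucc = x i + R := by
    rw [PiLp.add_apply]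
    simp [L1, hb1, Fin.snoc_castSucc]
  have e2 : ((L1 u) x + b1) (Fin.last n) = ⟪u, x⟫ + (-c) := by
    rw [PiLp.add_apply]
    simp [L1, hb1, Fin.snoc_last]
  show (compwise (fun t => max t 0) ((L1 u) x + b1)) i.castSucc
      - (compwise (fun t => max t 0) ((L1 u) x + b1)) (Fin.last n) * u i + b2 i
      = max (x i + R) 0 - R - max (⟪u, x⟫ - c) 0 * u i
  show max (((L1 u) x + b1) i.castSucc) 0 - max (((L1 u) x + b1) (Fin.last n)) 0 * u i + (-R)
      = max (x i + R) 0 - R - max (⟪u, x⟫ - c) 0 * u i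
  rw [e1, e2, ← sub_eq_add_neg]
  ring_nf

lemma Qfun_eq (c R : ℝ) (u x : EuclideanSpace ℝ (Fin n)) (h : ∀ i, -R ≤ x i) :
    Qfun c R u x = Pfun c u x := by
  refine PiLp.ext fun i => ?_
  show max (x i + R) 0 - R - max (⟪u, x⟫ - c) 0 * u i
      = (x - max (⟪u, x⟫ - c) 0 • u) i
  rw [PiLp.sub_apply, PiLp.smul_apply, smul_eq_mul, max_eq_left (by linarith [h i])]
  ring

noncomputable def passQ (c R : ℝ) : List (EuclideanSpace ℝ (Fin n)) →
    EuclideanSpace ℝ (Fin n) → EuclideanSpace ℝ (Fin n)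
  | [] => fun x => x
  | u :: l => fun x => passQ c R l (Qfun c R u x)

lemma passQ_net (c R : ℝ) (l : List (EuclideanSpace ℝ (Fin n))) :
    IsReLUNet (passQ c R l) := by
  induction l with
  | nil => exact net_id
  | cons u l ih => exact net_congr (net_comp ih (Qfun_net c R u)) (fun x => rfl)

lemma passQ_eq (c R : ℝ) (hc : 0 ≤ c) (l : List (EuclideanSpace ℝ (Fin n)))
    (hl : ∀ u ∈ l, ‖u‖ = 1) (x : EuclideanSpace ℝ (Fin n)) (hx : ‖x‖ ≤ R) :
    passQ c R l x = pass c l x := by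
  induction l generalizing x with
  | nil => rfl
  | cons u l ih =>
      have hu : ‖u‖ = 1 := hl u (List.mem_cons_self)
      have hl' : ∀ v ∈ l, ‖v‖ = 1 := fun v hv => hl v (List.mem_cons_of_mem u hv)
      have hco : ∀ i, -R ≤ x i := by
        intro i
        have h1 := abs_coord_le_norm x i
        have := (abs_le.mp (h1.trans hx)).1
        linarith
      show passQ c R l (Qfun c R u x) = pass c l (Pfun c u x)
      rw [Qfun_eq c R u x hco]
      exact ih hl' (Pfun c u x) ((Pfun_norm_le c hc hu x).trans hx)

lemma passQ_iter_eq (c R : ℝ) (hc : 0 ≤ c) (l : List (EuclideanSpace ℝ (Fin n)))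
    (hl : ∀ u ∈ l, ‖u‖ = 1) (k : ℕ) (x : EuclideanSpace ℝ (Fin n)) (hx : ‖x‖ ≤ R) :
    (passQ c R l)^[k] x = (pass c l)^[k] x := by
  induction k generalizing x with
  | zero => rfl
  | succ k ih =>
      rw [Function.iterate_succ_apply, Function.iterate_succ_apply,
        passQ_eq c R hc l hl x hx]
      exact ih (pass c l x) ((pass_norm_le c hc l hl x).trans hx)

end Stmt6Aux


open Stmt6Aux in
/-- clipping lemma: a ReLU network close to the identity on a
ball and globally bounded by `2M`. -/
theorem stmt_6 (κ : ℕ) (M δ : ℝ) (hM : 0 < M) (hδ : 0 < δ) (hδM : δ < M / 2) :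
    ∃ f : EuclideanSpace ℝ (Fin κ) → EuclideanSpace ℝ (Fin κ),
      IsReLUNet f ∧
      (∀ x : EuclideanSpace ℝ (Fin κ), ‖x‖ < M + 2 * δ → ‖f x - x‖ < δ) ∧
      (∀ x : EuclideanSpace ℝ (Fin κ), ‖f x‖ ≤ 2 * M) := by
  classical
  obtain ⟨c, hcdef⟩ : ∃ c : ℝ, c = M + 2 * δ := ⟨_, rfl⟩
  have hc0 : 0 < c := by rw [hcdef]; linarith
  have hc2M : c < 2 * M := by rw [hcdef]; linarith
  obtain ⟨γ, hγdef⟩ : ∃ γ : ℝ, γ = (c + 2 * M) / (4 * M) := ⟨_, rfl⟩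
  have hγ0 : 0 < γ := by rw [hγdef]; positivity
  have hγ1 : γ < 1 := by
    rw [hγdef, div_lt_one (by linarith)]
    rw [hcdef]; linarith
  obtain ⟨l, hl, hnet⟩ := exists_net κ γ hγ1
  obtain ⟨R, hRdef⟩ : ∃ R : ℝ, R = Real.sqrt κ * c + c := ⟨_, rfl⟩
  have hR0 : 0 ≤ R := by rw [hRdef]; positivity
  have hcR : c ≤ R := by
    have h : 0 ≤ Real.sqrt κ * c := by positivity
    rw [hRdef]; linarith
  obtain ⟨Δ, hΔdef⟩ : ∃ Δ : ℝ, Δ = c * (2 * M - c) := ⟨_, rfl⟩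
  have hΔ : 0 < Δ := by
    rw [hΔdef]; apply mul_pos hc0; linarith
  -- one-pass descent
  have key : ∀ x : EuclideanSpace ℝ (Fin κ), ‖pass c l x‖ ≤ 2 * M ∨
      ‖pass c l x‖ ^ 2 ≤ ‖x‖ ^ 2 - Δ := by
    intro x
    by_cases hx : ‖pass c l x‖ ≤ 2 * M
    · exact Or.inl hx
    · right
      push_neg at hx
      have hHpos : 0 < ‖pass c l x‖ := by linarith
      set w := ‖pass c l x‖⁻¹ • pass c l x with hwdef
      have hw : ‖w‖ = 1 := by
        rw [hwdef, norm_smul, norm_inv, norm_norm]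
        exact inv_mul_cancel₀ (ne_of_gt hHpos)
      obtain ⟨u, hul, huw⟩ := hnet w hw
      have hiw : ⟪u, w⟫ = ‖pass c l x‖⁻¹ * ⟪u, pass c l x⟫ := by
        rw [hwdef, real_inner_smul_right]
      have hinner : ⟪u, pass c l x⟫ = ‖pass c l x‖ * ⟪u, w⟫ := by
        rw [hiw]; field_simp
      have hlow : γ * (2 * M) ≤ ⟪u, pass c l x⟫ := by
        rw [hinner]; nlinarith
      have hpi := pass_inner c hc0.le l hl hul x
      have h1 : 2 * c * (γ * (2 * M)) ≤ 2 * c * ⟪u, pass c l x⟫ := by nlinarith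
      have h2 : γ * (2 * M) = (c + 2 * M) / 2 := by
        rw [hγdef]; field_simp; ring
      rw [hΔdef]
      nlinarith
  -- iterated descent
  have iter : ∀ (k : ℕ) (x : EuclideanSpace ℝ (Fin κ)),
      ‖(pass c l)^[k] x‖ ≤ 2 * M ∨ ‖(pass c l)^[k] x‖ ^ 2 ≤ ‖x‖ ^ 2 - k * Δ := by
    intro k
    induction k with
    | zero => intro x; right; simp
    | succ k ih =>
        intro x
        rw [Function.iterate_succ_apply']
        rcases ih x with h | h
        · exact Or.inl ((pass_norm_le c hc0.le l hl _).trans h)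
        · rcases key ((pass c l)^[k] x) with h2 | h2
          · exact Or.inl h2
          · right
            push_cast
            linarith
  obtain ⟨K, hKdef⟩ : ∃ K : ℕ, K = ⌈R ^ 2 / Δ⌉₊ + 1 := ⟨_, rfl⟩
  have hKΔ : R ^ 2 < K * Δ := by
    have h1 : R ^ 2 / Δ ≤ (⌈R ^ 2 / Δ⌉₊ : ℝ) := Nat.le_ceil _
    have h2 : R ^ 2 ≤ (⌈R ^ 2 / Δ⌉₊ : ℝ) * Δ := by
      rw [← div_le_iff₀ hΔ] at *; exact h1
    have h3 : (K : ℝ) = (⌈R ^ 2 / Δ⌉₊ : ℝ) + 1 := by rw [hKdef]; push_cast; ring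
    rw [h3]; nlinarith
  have bound : ∀ x : EuclideanSpace ℝ (Fin κ), ‖x‖ ≤ R → ‖(pass c l)^[K] x‖ ≤ 2 * M := by
    intro x hx
    rcases iter K x with h | h
    · exact h
    · exfalso
      have hx2 : ‖x‖ ^ 2 ≤ R ^ 2 := by nlinarith [norm_nonneg x]
      nlinarith [sq_nonneg ‖(pass c l)^[K] x‖]
  refine ⟨fun x => (passQ c R l)^[K] (clipFun c x), ?_, ?_, ?_⟩
  · exact net_comp (net_iterate (passQ_net c R l) K) (clipFun_net c hc0.le)
  · intro x hx
    have hxc : ‖x‖ ≤ c := by rw [hcdef]; exact le_of_lt hx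
    have hclip : clipFun c x = x := clipFun_fix c x hxc
    have hfix : ∀ k : ℕ, (pass c l)^[k] x = x := by
      intro k
      induction k with
      | zero => rfl
      | succ k ih => rw [Function.iterate_succ_apply, pass_fix c l hl x hxc]; exact ih
    have : (passQ c R l)^[K] (clipFun c x) = x := by
      rw [hclip, passQ_iter_eq c R hc0.le l hl K x (hxc.trans hcR), hfix K]
    show ‖(passQ c R l)^[K] (clipFun c x) - x‖ < δ
    rw [this]
    simpa using hδ
  · intro x
    have hclipn : ‖clipFun c x‖ ≤ R := by
      have := clipFun_norm_le (n := κ) c hc0.le x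
      linarith
    show ‖(passQ c R l)^[K] (clipFun c x)‖ ≤ 2 * M
    rw [passQ_iter_eq c R hc0.le l hl K (clipFun c x) hclipn]
    exact bound (clipFun c x) hclipn
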